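/- arXiv:1601.04830 — 8 statements merged into one kernel-verified Lean document; each statement's English description precedes it below -/
import Mathlib

section
/- A topological space X is discrete if and only if X is T0 and the closure of every subset of X is open. -/
/-- A space is discrete iff it is T0 and the closure of every subset is open. -/
theorem stmt4 {X : Type*} [TopologicalSpace X] :
    (∀ A : Set X, IsOpen A) ↔
      ((∀ x y : X, closure ({x} : Set X) = closure ({y} : Set X) → x = y) ∧
        ∀ D : Set X, IsOpen (closure D)) := by
  constructor
  · intro h
    constructor
    · intro x y hxy
      have hx : x ∈ closure ({x} : Set X) := subset_closure rfl
      rw [hxy] at hx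
      have : IsClosed ({y} : Set X) := ⟨h _⟩
      rw [this.closure_eq] at hx
      exact hx
    · intro D; exact h _
  · rintro ⟨ht, hc⟩ A
    have hsing : ∀ x : X, IsOpen ({x} : Set X) := by
      intro x
      have hcx : closure ({x} : Set X) = {x} := by
        apply Set.Subset.antisymm _ subset_closure
        intro y hy
        have hox : IsOpen (closure ({x} : Set X)) := hc _
        have hoy : IsOpen (closure ({y} : Set X)) := hc _
        -- x ∈ closure {y}: closure {y} is open, contains y, so meets {x}
        have hxcy : x ∈ closure ({y} : Set X) := by
          rcases ((mem_closure_iff.mp hy) _ hoy (subset_closure rfl)) with ⟨z, hz1, hz2⟩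
          rw [Set.mem_singleton_iff] at hz2; rwa [hz2] at hz1
        have h1 : closure ({y} : Set X) ⊆ closure ({x} : Set X) :=
          closure_minimal (Set.singleton_subset_iff.mpr hy) isClosed_closure
        have h2 : closure ({x} : Set X) ⊆ closure ({y} : Set X) :=
          closure_minimal (Set.singleton_subset_iff.mpr hxcy) isClosed_closure
        have := ht x y (Set.Subset.antisymm h2 h1)
        simp [this]
      rw [← hcx]; exact hc _
    have : A = ⋃ x ∈ A, ({x} : Set X) := by simp
    rw [this]
    exact isOpen_biUnion fun x _ => hsing x
end

section
/- Let L be a frame and c : L → L a closure operator (inflationary, monotone, idempotent). Then for all y ∈ L: ⨅_{b ∈ L} ((y → c b) → c b) = ⨅_{a ∈ L} (a → c (a ⊓ y)). -/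
/-- For a closure operator `c` on a frame,
`⨅ b, (y ⇨ c b) ⇨ c b = ⨅ a, a ⇨ c (a ⊓ y)`. -/
theorem stmt8 {L : Type*} [Order.Frame L] (c : L → L)
    (hinfl : ∀ x, x ≤ c x) (hmono : Monotone c) (hidem : ∀ x, c (c x) = c x) :
    ∀ y : L, (⨅ b : L, (y ⇨ c b) ⇨ c b) = ⨅ a : L, a ⇨ c (a ⊓ y) := by
  intro y
  apply le_antisymm
  · apply le_iInf; intro a
    refine le_trans (iInf_le _ (a ⊓ y)) ?_
    exact himp_le_himp_right (le_himp_iff.mpr (hinfl _))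
  · apply le_iInf; intro b
    refine le_trans (iInf_le _ (y ⇨ c b)) ?_
    apply himp_le_himp_left
    calc c ((y ⇨ c b) ⊓ y) ≤ c (c b) := hmono (by rw [inf_comm]; exact inf_himp_le)
      _ = c b := hidem b
end

section
/- Let L be a frame, c : L → L a closure operator, and define j(y) = ⨅_{a ∈ L} (a → c (a ⊓ y)). Then j(x) ≤ c(x) for all x, and if k is any nucleus on L with k(x) ≤ c(x) for all x, then k(x) ≤ j(x) for all x. -/
/-- A nucleus: monotone, inflationary, idempotent, preserving binary meets. -/
def IsNucleus {L : Type*} [Order.Frame L] (j : L → L) : Prop :=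
  Monotone j ∧ (∀ x, x ≤ j x) ∧ (∀ x, j (j x) = j x) ∧ ∀ x y, j (x ⊓ y) = j x ⊓ j y

/-- `j(y) = ⨅ a, a ⇨ c (a ⊓ y)` is below `c` and is the largest nucleus below `c`. -/
theorem stmt9 {L : Type*} [Order.Frame L] (c : L → L)
    (hinfl : ∀ x, x ≤ c x) (hmono : Monotone c) (hidem : ∀ x, c (c x) = c x) :
    (∀ x : L, (⨅ a : L, a ⇨ c (a ⊓ x)) ≤ c x) ∧
    (∀ k : L → L, IsNucleus k → (∀ x, k x ≤ c x) →
      ∀ x : L, k x ≤ ⨅ a : L, a ⇨ c (a ⊓ x)) := by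
  constructor
  · intro x
    calc (⨅ a : L, a ⇨ c (a ⊓ x)) ≤ ⊤ ⇨ c (⊤ ⊓ x) := iInf_le _ ⊤
    _ = c x := by rw [top_inf_eq, top_himp]
  · rintro k ⟨kmono, kinfl, _, kmeet⟩ hk x
    refine le_iInf fun a => le_himp_iff.mpr ?_
    calc k x ⊓ a ≤ k x ⊓ k a := inf_le_inf_left _ (kinfl a)
    _ = k (x ⊓ a) := (kmeet x a).symm
    _ ≤ c (x ⊓ a) := hk _
    _ = c (a ⊓ x) := by rw [inf_comm]
end

section
/- Let L be a complete lattice equipped with a symmetric binary relation ⋈ satisfying: (1) (x ⊓ z) ⋈ y ↔ x ⋈ (z ⊓ y); (2) x ⋈ (⨆ i, y i) ↔ ∃ i, x ⋈ (y i); (3) x ≤ y ↔ ∀ z, (z ⋈ x → z ⋈ y). Then L satisfies the frame distributivity law: x ⊓ (⨆ i, y i) ≤ ⨆ i, (x ⊓ y i). -/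
/-- An overlap algebra satisfies the frame distributivity law. -/
theorem stmt10 {L : Type*} [CompleteLattice L] (ov : L → L → Prop)
    (hsymm : ∀ x y, ov x y → ov y x)
    (htransfer : ∀ x z y, ov (x ⊓ z) y ↔ ov x (z ⊓ y))
    (hsplit : ∀ (x : L) (s : Set L), ov x (sSup s) ↔ ∃ y ∈ s, ov x y)
    (hdensity : ∀ x y : L, x ≤ y ↔ ∀ z, ov z x → ov z y) :
    ∀ (x : L) (s : Set L), x ⊓ sSup s ≤ ⨆ y ∈ s, x ⊓ y := by
  intro x s
  rw [hdensity]
  intro z hz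
  rw [show (⨆ y ∈ s, x ⊓ y) = sSup ((fun y => x ⊓ y) '' s) by
    rw [sSup_image]]
  rw [hsplit]
  rw [← htransfer] at hz
  rw [hsplit] at hz
  obtain ⟨y, hy, hzy⟩ := hz
  exact ⟨x ⊓ y, Set.mem_image_of_mem _ hy, (htransfer z x y).mp hzy⟩
end

section
/- Let L be a complete lattice with a symmetric relation ⋈ satisfying the transfer axiom ((x ⊓ z) ⋈ y ↔ x ⋈ (z ⊓ y)), the splitting axiom (x ⋈ ⨆ᵢ yᵢ ↔ ∃ i, x ⋈ yᵢ), and the density axiom (x ≤ y ↔ ∀ z, z ⋈ x → z ⋈ y). Then x ⋈ y holds if and only if (x ⊓ y) ⋈ (x ⊓ y). -/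
/-- In an overlap algebra, `x ⋈ y ↔ (x ⊓ y) ⋈ (x ⊓ y)`. -/
theorem stmt11 {L : Type*} [CompleteLattice L] (ov : L → L → Prop)
    (hsymm : ∀ x y, ov x y → ov y x)
    (htransfer : ∀ x z y, ov (x ⊓ z) y ↔ ov x (z ⊓ y))
    (hsplit : ∀ (x : L) (s : Set L), ov x (sSup s) ↔ ∃ y ∈ s, ov x y)
    (hdensity : ∀ x y : L, x ≤ y ↔ ∀ z, ov z x → ov z y) :
    ∀ x y : L, ov x y ↔ ov (x ⊓ y) (x ⊓ y) := by
  intro x y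
  constructor
  · intro h
    have h1 : ov (x ⊓ y) y := (htransfer x y y).mpr (by simpa using h)
    have h2 : ov y (x ⊓ y) := hsymm _ _ h1
    have h3 : ov (y ⊓ x) (x ⊓ y) := (htransfer y x (x ⊓ y)).mpr (by
      simpa [inf_assoc, inf_left_comm, inf_comm] using h2)
    simpa [inf_comm] using h3
  · intro h
    have h1 : ov x (y ⊓ (x ⊓ y)) := (htransfer x y (x ⊓ y)).mp h
    have h2 : ov x (x ⊓ y) := by simpa [inf_left_comm, inf_comm] using h1
    exact (hdensity (x ⊓ y) y).mp inf_le_right x h2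
end

section
/- Let L be a complete lattice with a symmetric relation ⋈ satisfying the transfer, splitting, and density axioms of an overlap algebra. Then (classically) L is a complete Boolean algebra: for every x, x ⊔ xᶜ = ⊤, where xᶜ = ⨆ {z | z ⊓ x = ⊥}. -/
/-- Classically, any overlap algebra is a complete Boolean algebra:
`x ⊔ xᶜ = ⊤` where `xᶜ = ⨆ {z | z ⊓ x = ⊥}`. -/
theorem stmt14 {L : Type*} [CompleteLattice L] (ov : L → L → Prop)
    (hsymm : ∀ x y, ov x y → ov y x)
    (htransfer : ∀ x z y, ov (x ⊓ z) y ↔ ov x (z ⊓ y))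
    (hsplit : ∀ (x : L) (s : Set L), ov x (sSup s) ↔ ∃ y ∈ s, ov x y)
    (hdensity : ∀ x y : L, x ≤ y ↔ ∀ z, ov z x → ov z y) :
    ∀ x : L, x ⊔ sSup {z : L | z ⊓ x = ⊥} = ⊤ := by
  have hbot : ∀ z : L, ¬ ov z ⊥ := by
    intro z h
    have h' : ov z (sSup (∅ : Set L)) := by simpa using h
    obtain ⟨y, hy, -⟩ := (hsplit z ∅).mp h'
    exact hy
  have hmono : ∀ a b z : L, a ≤ b → ov z a → ov z b := fun a b z hab =>
    (hdensity a b).mp hab z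
  have hne : ∀ a b : L, ov a b → a ⊓ b ≠ ⊥ := by
    intro a b h hab
    have h1 : ov (a ⊓ b) b := (htransfer a b b).mpr (by simpa using h)
    have h2 : ov b (a ⊓ b) := hsymm _ _ h1
    have h3 : ov (b ⊓ a) (a ⊓ b) := (htransfer b a (a ⊓ b)).mpr (by
      have e : a ⊓ (a ⊓ b) = a ⊓ b := by rw [← inf_assoc, inf_idem]
      rw [e]; exact h2)
    rw [inf_comm b a, hab] at h3
    exact hbot _ h3
  have hof : ∀ a b : L, a ⊓ b ≠ ⊥ → ov a b := by
    intro a b hab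
    by_contra hno
    apply hab
    rw [← le_bot_iff]
    rw [hdensity]
    intro z hz
    have h1 : ov (z ⊓ a) b := (htransfer z a b).mpr hz
    have h2 : ov b (z ⊓ a) := hsymm _ _ h1
    have h3 : ov b a := hmono _ _ _ inf_le_right h2
    exact absurd (hsymm _ _ h3) hno
  intro x
  rw [eq_top_iff, hdensity]
  intro z hz
  have hzne : z ≠ ⊥ := by
    have := hne z ⊤ hz
    simpa using this
  by_cases hzx : ov z x
  · exact hmono _ _ _ le_sup_left hzx
  · have hmem : z ∈ {w : L | w ⊓ x = ⊥} := by
      by_contra h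
      exact hzx (hof z x h)
    have hzz : ov z z := hof z z (by simpa using hzne)
    exact hmono _ _ _ (le_trans (le_sSup hmem) le_sup_right) hzz
end

section
/- Let L be a frame and Pos : L → Ω a join-preserving map (left adjoint to the map p ↦ ⨆{x | p}, i.e., Pos x ≤ p ↔ x ≤ ⨆{y : L | y = ⊤ ∧ p}). Define R(y) = ⨆{x | ∀ z, Pos(z ⊓ x) → Pos(z ⊓ y)}. Then R is a nucleus on L. -/
section aux
variable {L : Type*} [Order.Frame L] (Pos : L → Prop)

lemma posMono16
    (hadj : ∀ (x : L) (p : Prop), (Pos x → p) ↔ x ≤ sSup {y : L | y = ⊤ ∧ p}) {x y : L} (h : x ≤ y) : Pos x → Pos y := by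
  exact (hadj x (Pos y)).mpr (le_trans h ((hadj y (Pos y)).mp id))

lemma posSup16
    (hadj : ∀ (x : L) (p : Prop), (Pos x → p) ↔ x ≤ sSup {y : L | y = ⊤ ∧ p})
    {ι : Sort*} (f : ι → L) : Pos (⨆ i, f i) → ∃ i, Pos (f i) := by
  refine (hadj _ _).mpr (iSup_le fun i => ?_)
  exact (hadj (f i) _).mp fun h => ⟨i, h⟩

lemma posInfSup16
    (hadj : ∀ (x : L) (p : Prop), (Pos x → p) ↔ x ≤ sSup {y : L | y = ⊤ ∧ p})
    (z : L) (S : Set L) (h : Pos (z ⊓ sSup S)) :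
    ∃ t ∈ S, Pos (z ⊓ t) := by
  rw [inf_sSup_eq] at h
  obtain ⟨t, ht⟩ := posSup16 Pos hadj _ h
  obtain ⟨hts, ht⟩ := posSup16 Pos hadj _ ht
  exact ⟨t, hts, ht⟩

end aux

/-- For an overt frame, `R(y) = ⨆{x | ∀ z, Pos(z ⊓ x) → Pos(z ⊓ y)}` is a nucleus. -/
theorem stmt16 {L : Type*} [Order.Frame L] (Pos : L → Prop)
    (hadj : ∀ (x : L) (p : Prop), (Pos x → p) ↔ x ≤ sSup {y : L | y = ⊤ ∧ p}) :
    Monotone (fun y : L => sSup {x : L | ∀ z, Pos (z ⊓ x) → Pos (z ⊓ y)}) ∧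
    (∀ y : L, y ≤ sSup {x : L | ∀ z, Pos (z ⊓ x) → Pos (z ⊓ y)}) ∧
    (∀ y : L,
      sSup {x : L | ∀ z, Pos (z ⊓ x) →
          Pos (z ⊓ sSup {x' : L | ∀ w, Pos (w ⊓ x') → Pos (w ⊓ y)})} =
        sSup {x : L | ∀ z, Pos (z ⊓ x) → Pos (z ⊓ y)}) ∧
    (∀ a b : L,
      sSup {x : L | ∀ z, Pos (z ⊓ x) → Pos (z ⊓ (a ⊓ b))} =
        sSup {x : L | ∀ z, Pos (z ⊓ x) → Pos (z ⊓ a)} ⊓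
          sSup {x : L | ∀ z, Pos (z ⊓ x) → Pos (z ⊓ b)}) := by
  have mono : Monotone (fun y : L => sSup {x : L | ∀ z, Pos (z ⊓ x) → Pos (z ⊓ y)}) := by
    intro y y' hyy'
    apply sSup_le_sSup
    intro x hx z hz
    exact posMono16 Pos hadj (inf_le_inf_left z hyy') (hx z hz)
  have infl : ∀ y : L, y ≤ sSup {x : L | ∀ z, Pos (z ⊓ x) → Pos (z ⊓ y)} :=
    fun y => le_sSup (fun z hz => hz)
  refine ⟨mono, infl, fun y => ?_, fun a b => ?_⟩
  · refine le_antisymm (sSup_le fun x hx => le_sSup fun z hz => ?_)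
      (infl _)
    obtain ⟨t, ht, hpt⟩ := posInfSup16 Pos hadj z _ (hx z hz)
    exact ht z hpt
  · refine le_antisymm (le_inf (mono inf_le_left) (mono inf_le_right)) ?_
    refine le_sSup fun z hz => ?_
    rw [← inf_assoc] at hz
    obtain ⟨t, ht, hpt⟩ := posInfSup16 Pos hadj _ _ hz
    have h1 : Pos ((z ⊓ t) ⊓ sSup {x : L | ∀ w, Pos (w ⊓ x) → Pos (w ⊓ a)}) := by
      have e : z ⊓ sSup {x : L | ∀ w, Pos (w ⊓ x) → Pos (w ⊓ a)} ⊓ t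
          = (z ⊓ t) ⊓ sSup {x : L | ∀ w, Pos (w ⊓ x) → Pos (w ⊓ a)} := by ac_rfl
      rwa [e] at hpt
    obtain ⟨s, hs, hps⟩ := posInfSup16 Pos hadj _ _ h1
    have h2 : Pos ((z ⊓ t) ⊓ a) := hs _ hps
    have h3 : Pos ((z ⊓ a) ⊓ t) := by
      have e : (z ⊓ t) ⊓ a = (z ⊓ a) ⊓ t := by ac_rfl
      rwa [e] at h2
    have h4 : Pos ((z ⊓ a) ⊓ b) := ht _ h3
    rwa [inf_assoc] at h4
end

section
/- Let L be a frame and j a nucleus on L. The sublocale L_j (fixed points of j) is strongly dense in L — meaning j(⨆{x : L | x = ⊤ ∧ p}) = ⨆{x : L | x = ⊤ ∧ p} for every proposition p — if and only if, assuming L is overt with positivity Pos, Pos(j(x)) ↔ Pos(x) for all x ∈ L. -/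
/-- For an overt frame `L` with positivity `Pos` and a nucleus `j`, the sublocale of `j`
is strongly dense (`j ∘ Ω! = Ω!`) iff `Pos ∘ j = Pos`. -/
theorem stmt18 {L : Type*} [Order.Frame L] (j : L → L)
    (hmono : Monotone j) (hinfl : ∀ x, x ≤ j x) (hidem : ∀ x, j (j x) = j x)
    (hmeet : ∀ x y, j (x ⊓ y) = j x ⊓ j y)
    (Pos : L → Prop)
    (hadj : ∀ (x : L) (p : Prop), (Pos x → p) ↔ x ≤ sSup {y : L | y = ⊤ ∧ p}) :
    (∀ p : Prop, j (sSup {y : L | y = ⊤ ∧ p}) = sSup {y : L | y = ⊤ ∧ p}) ↔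
      (∀ x : L, Pos (j x) ↔ Pos x) := by
  constructor
  · intro hd x
    constructor
    · intro hpj
      -- x ≤ j x ≤ Ω (Pos x)? Instead: j x ≤ j (Ω (Pos x)) = Ω (Pos x)
      have h1 : x ≤ sSup {y : L | y = ⊤ ∧ Pos x} := (hadj x (Pos x)).mp id
      have h2 : j x ≤ sSup {y : L | y = ⊤ ∧ Pos x} := by
        calc j x ≤ j (sSup {y : L | y = ⊤ ∧ Pos x}) := hmono h1
        _ = _ := hd (Pos x)
      exact (hadj (j x) (Pos x)).mpr h2 hpj
    · intro hp
      have h1 : j x ≤ sSup {y : L | y = ⊤ ∧ Pos (j x)} := (hadj (j x) (Pos (j x))).mp id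
      exact (hadj x (Pos (j x))).mpr ((hinfl x).trans h1) hp
  · intro hpos p
    refine le_antisymm ?_ (hinfl _)
    refine (hadj _ p).mp ?_
    intro hpj
    have := (hpos _).mp hpj
    exact (hadj (sSup {y : L | y = ⊤ ∧ p}) p).mpr le_rfl this
end
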